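/- For λ ∈ [1,∞), τ = e^{iθ} ∈ T, and k ∈ ℕ, with φ(e^{ix}) = e^{ikx} + e^{−ikx}, the moving average satisfies δ_{λ,τ}(φ²) − δ_{λ,τ}(φ)² = 2cos(2kθ)(sinc(2kπ/λ) − sinc(kπ/λ)²) + 2 − 2 sinc(kπ/λ)², where sinc(x) = sin(x)/x. -/

import Mathlib

open MeasureTheory Real

noncomputable section

/-- The moving average `δ_{λ,τ}(a) = (λ/2π) ∫_{θ-π/λ}^{θ+π/λ} a(e^{ix}) dx`, `τ = e^{iθ}`. -/
def movAvg (a : ℝ → ℂ) (lam θ : ℝ) : ℂ :=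
  (lam / (2 * π)) * ∫ x in (θ - π / lam)..(θ + π / lam), a x

/-- The even trigonometric "monomial" `φ(e^{ix}) = e^{ikx} + e^{-ikx}`. -/
def phiK (k : ℕ) : ℝ → ℂ := fun x =>
  Complex.exp (Complex.I * k * x) + Complex.exp (-(Complex.I * k * x))

/-- `_root_.sinc x = sin x / x` for `x ≠ 0`, and `_root_.sinc 0 = 1`. -/
def sinc (x : ℝ) : ℝ := if x = 0 then 1 else Real.sin x / x

lemma phiK_eq (n : ℕ) (x : ℝ) : phiK n x = ((2 * Real.cos (n * x) : ℝ) : ℂ) := by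
  unfold phiK
  have h1 : (Complex.I * n * x) = (((n * x : ℝ) : ℂ)) * Complex.I := by push_cast; ring
  have h2 : -((((n * x : ℝ) : ℂ)) * Complex.I) = (((-(n * x) : ℝ) : ℂ)) * Complex.I := by
    push_cast; ring
  rw [h1, h2, Complex.exp_mul_I, Complex.exp_mul_I]
  simp only [← Complex.ofReal_cos, ← Complex.ofReal_sin, Real.cos_neg, Real.sin_neg]
  push_cast
  ring

/-- The key real integral computation, valid also for `c = 0`. -/
lemma key (c lam θ : ℝ) (hlam : lam ≠ 0) :
    (lam / (2 * π)) * ∫ x in (θ - π / lam)..(θ + π / lam), 2 * Real.cos (c * x)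
      = 2 * Real.cos (c * θ) * _root_.sinc (c * π / lam) := by
  rcases eq_or_ne c 0 with rfl | hc
  · simp [_root_.sinc, intervalIntegral.integral_const]
    field_simp
    ring
  · have : (∫ x in (θ - π / lam)..(θ + π / lam), 2 * Real.cos (c * x))
        = 2 * ((Real.sin (c * (θ + π / lam)) - Real.sin (c * (θ - π / lam))) / c) := by
      rw [intervalIntegral.integral_const_mul,
        intervalIntegral.integral_comp_mul_left (fun x => Real.cos x) hc,
        integral_cos]
      rw [smul_eq_mul]
      ring
    rw [this]
    have harg : c * π / lam ≠ 0 := by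
      have hπ : (π : ℝ) ≠ 0 := Real.pi_ne_zero
      field_simp
      exact div_ne_zero (mul_ne_zero hc hπ) hlam
    rw [_root_.sinc, if_neg harg]
    have e1 : c * (θ + π / lam) = c * θ + c * π / lam := by field_simp
    have e2 : c * (θ - π / lam) = c * θ - c * π / lam := by field_simp
    rw [e1, e2, Real.sin_add, Real.sin_sub]
    field_simp
    ring

lemma movAvg_phiK (n : ℕ) (lam θ : ℝ) (hlam : lam ≠ 0) :
    movAvg (phiK n) lam θ = ((2 * Real.cos (n * θ) * _root_.sinc (n * π / lam) : ℝ) : ℂ) := by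
  unfold movAvg
  have : (∫ x in (θ - π / lam)..(θ + π / lam), phiK n x)
      = ((∫ x in (θ - π / lam)..(θ + π / lam), 2 * Real.cos (n * x) : ℝ) : ℂ) := by
    rw [← intervalIntegral.integral_ofReal]
    exact intervalIntegral.integral_congr fun x _ => phiK_eq n x
  rw [this, ← key (n : ℝ) lam θ hlam]
  push_cast
  ring

lemma movAvg_phiK_sq (k : ℕ) (lam θ : ℝ) (hlam : lam ≠ 0) :
    movAvg (phiK k * phiK k) lam θ
      = ((2 * Real.cos (2 * k * θ) * _root_.sinc (2 * k * π / lam) + 2 : ℝ) : ℂ) := by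
  unfold movAvg
  have hpt : ∀ x : ℝ, (phiK k * phiK k) x
      = ((2 * Real.cos ((2 * k) * x) + 2 * Real.cos (0 * x) : ℝ) : ℂ) := by
    intro x
    have : (phiK k * phiK k) x = phiK k x * phiK k x := rfl
    have hc : Real.cos (2 * k * x) = 2 * Real.cos (k * x) ^ 2 - 1 := by
      rw [show (2 * (k : ℝ) * x) = 2 * ((k : ℝ) * x) by ring, Real.cos_two_mul]
    rw [this, phiK_eq, ← Complex.ofReal_mul]
    norm_cast
    push_cast
    rw [hc]
    simp
    ring
  have hint : (∫ x in (θ - π / lam)..(θ + π / lam), (phiK k * phiK k) x)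
      = ((∫ x in (θ - π / lam)..(θ + π / lam),
          (2 * Real.cos ((2 * k) * x) + 2 * Real.cos (0 * x)) : ℝ) : ℂ) := by
    rw [← intervalIntegral.integral_ofReal]
    exact intervalIntegral.integral_congr fun x _ => hpt x
  have hi1 : IntervalIntegrable (fun x => 2 * Real.cos ((2 * k) * x)) volume
      (θ - π / lam) (θ + π / lam) := (by fun_prop : Continuous _).intervalIntegrable _ _
  have hi2 : IntervalIntegrable (fun x => 2 * Real.cos ((0 : ℝ) * x)) volume
      (θ - π / lam) (θ + π / lam) := (by fun_prop : Continuous _).intervalIntegrable _ _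
  rw [hint, intervalIntegral.integral_add hi1 hi2]
  have k1 := key (2 * k) lam θ hlam
  have k2 := key 0 lam θ hlam
  have : (lam / (2 * π)) * ((∫ x in (θ - π / lam)..(θ + π / lam), 2 * Real.cos ((2 * k) * x))
        + (∫ x in (θ - π / lam)..(θ + π / lam), 2 * Real.cos ((0 : ℝ) * x)))
      = 2 * Real.cos (2 * k * θ) * _root_.sinc (2 * k * π / lam) + 2 := by
    rw [mul_add, k1, k2]
    simp [_root_.sinc]
  rw [← this]
  push_cast
  ring

/-- For `λ ∈ [1,∞)`, `τ = e^{iθ}`, `k ∈ ℕ`, and `φ(e^{ix}) = e^{ikx} + e^{-ikx}`, one has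
`δ_{λ,τ}(φ²) - δ_{λ,τ}(φ)²
  = 2cos(2kθ)(_root_.sinc(2kπ/λ) - _root_.sinc(kπ/λ)²) + 2 - 2 _root_.sinc(kπ/λ)²`. -/
theorem movAvg_phi_identity (lam θ : ℝ) (hlam : 1 ≤ lam) (k : ℕ) :
    movAvg (phiK k * phiK k) lam θ - (movAvg (phiK k) lam θ) ^ 2 =
      ((2 * Real.cos (2 * k * θ) * (_root_.sinc (2 * k * π / lam) - (_root_.sinc (k * π / lam)) ^ 2)
        + 2 - 2 * (_root_.sinc (k * π / lam)) ^ 2 : ℝ) : ℂ) := by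
  have hlam0 : lam ≠ 0 := by linarith
  rw [movAvg_phiK k lam θ hlam0, movAvg_phiK_sq k lam θ hlam0]
  have hreal : (2 * Real.cos (2 * k * θ) * _root_.sinc (2 * k * π / lam) + 2)
      - (2 * Real.cos (k * θ) * _root_.sinc (k * π / lam)) ^ 2
      = 2 * Real.cos (2 * k * θ) * (_root_.sinc (2 * k * π / lam) - (_root_.sinc (k * π / lam)) ^ 2)
        + 2 - 2 * (_root_.sinc (k * π / lam)) ^ 2 := by
    have hc : Real.cos (2 * k * θ) = 2 * Real.cos (k * θ) ^ 2 - 1 := by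
      rw [show (2 * (k : ℝ) * θ) = 2 * ((k : ℝ) * θ) by ring, Real.cos_two_mul]
    rw [hc]; ring
  rw [← hreal]
  push_cast
  ring
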